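/- Let h ≥ 3, p ≥ 2, m ≥ 0 with (h−2)(p−1) ≥ 2, and let g assign to each ℓ ∈ [m] and each i ∈ [h] an index g(ℓ,i) ∈ [p]. In the captain network G_M(h,p,m,g), the core number of every captain C_{i,j} is strictly greater than the core number of every leader l_{i'}. -/

import Mathlib

/-- The core number of a vertex `v`: the largest `k` such that `v` belongs to a subgraph
in which every vertex has degree at least `k` within that subgraph (equivalently, an
induced subgraph with minimum degree at least `k`). -/
noncomputable def coreNumber {V : Type*} (G : SimpleGraph V) (v : V) : ℕ :=
  sSup {k : ℕ | ∃ s : Set V, v ∈ s ∧ ∀ w ∈ s, k ≤ (s ∩ G.neighborSet w).ncard}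

/-- Vertices of the captain network with `h` leaders, `h` groups of `p` captains,
and `m` remaining vertices. -/
inductive CNV (h p m : ℕ) where
  | L : Fin h → CNV h p m
  | C : Fin h → Fin p → CNV h p m
  | X : Fin m → CNV h p m

/-- Generating relation of the captain network `G_M(h,p,m,g)`: the leaders form a clique,
leader `l_i` is joined to all captains of its group `C_i`, the captains form a complete
`h`-partite graph (the groups being the parts), and `x_ℓ` is joined to the captain
`C_{i,g(ℓ,i)}` of each group `i`. -/
def cnRel {h p m : ℕ} (g : Fin m → Fin h → Fin p) : CNV h p m → CNV h p m → Prop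
  | .L i, .L i' => i ≠ i'
  | .L i, .C i' _ => i = i'
  | .C i _, .C i' _ => i ≠ i'
  | .X ℓ, .C i j => j = g ℓ i
  | _, _ => False

/-- The captain network `G_M(h,p,m,g)` for multiple leaders. -/
def captainNetwork {h p m : ℕ} (g : Fin m → Fin h → Fin p) : SimpleGraph (CNV h p m) :=
  SimpleGraph.fromRel (cnRel g)

private def cnvEquiv (h p m : ℕ) : CNV h p m ≃ (Fin h ⊕ (Fin h × Fin p) ⊕ Fin m) where
  toFun v := match v with
    | .L i => .inl i
    | .C i j => .inr (.inl (i, j))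
    | .X l => .inr (.inr l)
  invFun v := match v with
    | .inl i => .L i
    | .inr (.inl (i, j)) => .C i j
    | .inr (.inr l) => .X l
  left_inv v := by cases v <;> rfl
  right_inv v := by rcases v with i | (⟨i, j⟩ | l) <;> rfl

instance {h p m : ℕ} : Finite (CNV h p m) := Finite.of_equiv _ (cnvEquiv h p m).symm

private lemma coreNumber_le_of_nbhd {V : Type*} [Finite V] (G : SimpleGraph V) (v : V)
    (n : ℕ) (hn : (G.neighborSet v).ncard ≤ n) : coreNumber G v ≤ n := by
  apply csSup_le'
  rintro k ⟨s, hv, hk⟩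
  exact le_trans (hk v hv)
    (le_trans (Set.ncard_le_ncard Set.inter_subset_right (Set.toFinite _)) hn)

private lemma le_coreNumber {V : Type*} [Finite V] (G : SimpleGraph V) (v : V)
    (n : ℕ) (s : Set V) (hv : v ∈ s)
    (hs : ∀ w ∈ s, n ≤ (s ∩ G.neighborSet w).ncard) : n ≤ coreNumber G v := by
  apply le_csSup
  · refine ⟨Nat.card V, ?_⟩
    rintro k ⟨t, hvt, hk⟩
    refine le_trans (hk v hvt) ?_
    calc (t ∩ G.neighborSet v).ncard ≤ (Set.univ : Set V).ncard :=
          Set.ncard_le_ncard (Set.subset_univ _) (Set.toFinite _)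
      _ = Nat.card V := Set.ncard_univ V
  · exact ⟨s, hv, hs⟩

/-- Strict hiding in captain networks: if `h ≥ 3`, `p ≥ 2` and `(h−2)(p−1) ≥ 2`, then in
the captain network the core number of every captain is strictly greater than the core
number of every leader. -/
theorem stmt_16 {h p m : ℕ} (hh : 3 ≤ h) (hp : 2 ≤ p)
    (hcond : 2 ≤ (h - 2) * (p - 1))
    (g : Fin m → Fin h → Fin p) :
    ∀ (i i' : Fin h) (j : Fin p),
      coreNumber (captainNetwork g) (CNV.L i') <
      coreNumber (captainNetwork g) (CNV.C i j) := by
  intro i i' j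
  -- Upper bound for the leader: degree is (h-1) + p
  have hle : coreNumber (captainNetwork g) (CNV.L i') ≤ (h - 1) + p := by
    apply coreNumber_le_of_nbhd
    set F : ({a : Fin h // a ≠ i'} ⊕ Fin p) → CNV h p m :=
      fun q => match q with
        | .inl a => CNV.L a.1
        | .inr j' => CNV.C i' j' with hF
    have hFinj : Function.Injective F := by
      rintro (⟨a, ha⟩ | j1) (⟨b, hb⟩ | j2) hab <;>
        simp only [hF] at hab <;> first
        | (injection hab; aesop)
        | (exfalso; cases hab)
    have hsub : (captainNetwork g).neighborSet (CNV.L i') ⊆ Set.range F := by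
      intro w hw
      obtain ⟨hne, hrel⟩ := hw
      match w with
      | CNV.L a =>
          refine ⟨.inl ⟨a, ?_⟩, rfl⟩
          rintro rfl
          exact hne rfl
      | CNV.C a b =>
          have : i' = a := by
            rcases hrel with h1 | h1
            · exact h1
            · exact absurd h1 (by simp [cnRel])
          subst this
          exact ⟨.inr b, rfl⟩
      | CNV.X l =>
          rcases hrel with h1 | h1 <;> exact absurd h1 (by simp [cnRel])
    refine le_trans (Set.ncard_le_ncard hsub (Set.toFinite _)) ?_
    have : (Set.range F).ncard = Nat.card ({a : Fin h // a ≠ i'} ⊕ Fin p) := by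
      rw [← Nat.card_coe_set_eq, Nat.card_range_of_injective hFinj]
    rw [this]
    simp [Nat.card_eq_fintype_card, Fintype.card_subtype_compl]
  -- Lower bound for the captain: the captains form a complete h-partite graph
  have hge : (h - 1) * p ≤ coreNumber (captainNetwork g) (CNV.C i j) := by
    apply le_coreNumber _ _ _ (Set.range (fun q : Fin h × Fin p => CNV.C q.1 q.2))
    · exact ⟨(i, j), rfl⟩
    · rintro w ⟨⟨a, b⟩, rfl⟩
      set f : ({c : Fin h // c ≠ a} × Fin p) → CNV h p m :=
        fun q => CNV.C q.1.1 q.2 with hf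
      have hfinj : Function.Injective f := by
        rintro ⟨⟨c1, hc1⟩, d1⟩ ⟨⟨c2, hc2⟩, d2⟩ hcd
        simp only [hf] at hcd
        injection hcd
        aesop
      have hsub : Set.range f ⊆
          Set.range (fun q : Fin h × Fin p => CNV.C q.1 q.2) ∩
          (captainNetwork g).neighborSet (CNV.C a b) := by
        rintro w ⟨⟨⟨c, hc⟩, d⟩, rfl⟩
        refine ⟨⟨(c, d), rfl⟩, ?_, ?_⟩
        · intro hw
          injection hw with h1 h2
          exact hc h1.symm
        · left
          exact fun hac => hc hac.symm
      refine le_trans ?_ (Set.ncard_le_ncard hsub (Set.toFinite _))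
      have : (Set.range f).ncard = Nat.card ({c : Fin h // c ≠ a} × Fin p) := by
        rw [← Nat.card_coe_set_eq, Nat.card_range_of_injective hfinj]
      rw [this]
      simp [Nat.card_eq_fintype_card, Fintype.card_subtype_compl]
  -- Arithmetic: (h-1) + p < (h-1) * p
  refine lt_of_le_of_lt hle (lt_of_lt_of_le ?_ hge)
  obtain ⟨a, rfl⟩ : ∃ a, h = a + 3 := ⟨h - 3, by omega⟩
  obtain ⟨b, rfl⟩ : ∃ b, p = b + 2 := ⟨p - 2, by omega⟩
  have e1 : a + 3 - 2 = a + 1 := by omega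
  have e2 : b + 2 - 1 = b + 1 := by omega
  rw [e1, e2] at hcond
  have e3 : a + 3 - 1 = a + 2 := by omega
  rw [e3]
  nlinarith
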